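/- Let Γ be a group and let f : Γ → ℂ be a parallelogram function. Then for all γ, δ ∈ Γ and all n ∈ ℤ: (1) f(γⁿ) = n²·f(γ); (2) f(γδ) = f(δγ); (3) f(γδγ⁻¹δ⁻¹) = 0. -/
import Mathlib


theorem parallelogram_elementary_identities {Γ : Type*} [Group Γ] (f : Γ → ℂ)
    (hf : ∀ x y : Γ, f (x * y) + f (x * y⁻¹) = 2 * f x + 2 * f y) :
    (∀ (γ : Γ) (n : ℤ), f (γ ^ n) = (n : ℂ) ^ 2 * f γ) ∧
    (∀ γ δ : Γ, f (γ * δ) = f (δ * γ)) ∧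
    (∀ γ δ : Γ, f (γ * δ * γ⁻¹ * δ⁻¹) = 0) := by
  have h1 : f 1 = 0 := by
    have h := hf 1 1
    simp only [mul_one, inv_one] at h
    linear_combination -h / 2
  have finv : ∀ y : Γ, f y⁻¹ = f y := by
    intro y
    have h := hf 1 y
    simp only [one_mul] at h
    linear_combination h + 2 * h1
  have fcomm : ∀ x y : Γ, f (x * y) = f (y * x) := by
    intro x y
    have h := hf x y
    have h' := hf y x
    have hi : f (x * y⁻¹) = f (y * x⁻¹) := by
      have := finv (x * y⁻¹)
      rw [mul_inv_rev, inv_inv] at this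
      linear_combination -this
    linear_combination h - h' - hi
  have fconj : ∀ x y : Γ, f (x * y * x⁻¹) = f y := by
    intro x y
    have h := fcomm x (y * x⁻¹)
    rw [← mul_assoc] at h
    rw [h]
    group
  have hpow : ∀ (γ : Γ) (n : ℕ), f (γ ^ n) = (n : ℂ) ^ 2 * f γ := by
    intro γ n
    induction n using Nat.twoStepInduction with
    | zero => simp [h1]
    | one => simp
    | more n ih1 ih2 =>
      have h := hf (γ ^ (n + 1)) γ
      rw [← pow_succ] at h
      have hx : γ ^ (n + 1) * γ⁻¹ = γ ^ n := by
        rw [pow_succ, mul_assoc, mul_inv_cancel, mul_one]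
      rw [hx] at h
      push_cast at ih1 ih2 ⊢
      linear_combination h + 2 * ih2 - ih1
  have hintpow : ∀ (γ : Γ) (n : ℤ), f (γ ^ n) = (n : ℂ) ^ 2 * f γ := by
    intro γ n
    obtain ⟨m, rfl | rfl⟩ := Int.eq_nat_or_neg n
    · rw [zpow_natCast, hpow]; push_cast; ring
    · rw [zpow_neg, zpow_natCast, finv, hpow]; push_cast; ring
  refine ⟨hintpow, fcomm, ?_⟩
  intro x y
  -- f (x * y⁻¹ * y⁻¹ ...) commutator computation
  have hsq : ∀ z : Γ, f (z * z) = 4 * f z := by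
    intro z
    have h := hf z z
    rw [mul_inv_cancel, h1] at h
    linear_combination h
  have hA : f (y * y * x) = 2 * f y + 2 * f (x * y) - f x := by
    have h := hf y (y * x)
    have e1 : y * (y * x) = y * y * x := by group
    have e2 : y * (y * x)⁻¹ = y * x⁻¹ * y⁻¹ := by group
    rw [e1, e2, fconj y x⁻¹, finv x, fcomm y x] at h
    linear_combination h
  have hB : f (y * y * x * x) = 4 * f (x * y) := by
    have h := hf (y * y * x) x
    have e1 : y * y * x * x⁻¹ = y * y := by group
    rw [e1, hsq y] at h
    linear_combination h + 2 * hA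
  have h := hf (x * y) (y * x)
  have e1 : x * y * (y * x) = x * (y * y * x) := by group
  have e2 : x * y * (y * x)⁻¹ = x * y * x⁻¹ * y⁻¹ := by group
  rw [e1, e2, fcomm x (y * y * x)] at h
  linear_combination h - hB - 2 * fcomm x y
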